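/- Let G be a finite directed acyclic graph in which |rel(a)| < |rel(b)| for every edge (a,b). For any non-root vertex y, let C_y be the set of parents of y that form no unshielded collider centered at y, and D_y = pa(y) \ C_y. Then for every c ∈ C_y there exists d ∈ D_y with (c,d) ∈ E; that is, every such parent c has a child among the collider-endpoint parents of y. -/

import Mathlib

open Relation

def ancSet {V : Type*} (E : V → V → Prop) (v : V) : Set V :=
  {x | ReflTransGen E x v}

def descSet {V : Type*} (E : V → V → Prop) (v : V) : Set V :=
  {z | ReflTransGen E v z}

def relSet {V : Type*} (E : V → V → Prop) (v : V) : Set V :=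
  ⋃ x ∈ ancSet E v, descSet E x

def Adj {V : Type*} (E : V → V → Prop) (a b : V) : Prop := E a b ∨ E b a

def IsAcyclicRel {V : Type*} (E : V → V → Prop) : Prop :=
  ∀ v, ¬ TransGen E v v

/-- Parents of `y` adjacent to every other parent of `y`
(no unshielded collider centered at `y` through them). -/
def CSet {V : Type*} (E : V → V → Prop) (y : V) : Set V :=
  {x | E x y ∧ ∀ z, E z y → z ≠ x → Adj E x z}

/-- Parents of `y` that are endpoints of unshielded colliders centered at `y`. -/
def DSet {V : Type*} (E : V → V → Prop) (y : V) : Set V :=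
  {x | E x y} \ CSet E y

/-- If the number of relatives strictly increases along every edge, then for a
non-root `y`, every `c ∈ C_y` has some child `d ∈ D_y`. -/
theorem CSet_member_has_child_in_DSet {V : Type*} [Fintype V] (E : V → V → Prop)
    (hacyc : IsAcyclicRel E)
    (hrel : ∀ a b, E a b → (relSet E a).ncard < (relSet E b).ncard)
    (y : V) (hy : ∃ x, E x y) :
    ∀ c ∈ CSet E y, ∃ d ∈ DSet E y, E c d := by
  intro c hc
  by_contra h
  push_neg at h
  have hCP : ∀ p, E p y → E c p → p ∈ CSet E y := by
    intro p hp hcp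
    by_contra hpc
    exact h p ⟨hp, hpc⟩ hcp
  set M : Set V := {p | E p y ∧ (p = c ∨ E c p)} with hMdef
  have hcM : c ∈ M := ⟨hc.1, Or.inl rfl⟩
  obtain ⟨m, hmM, hmax⟩ :=
    Set.Finite.exists_maximalFor (fun p => (relSet E p).ncard) M (Set.toFinite M) ⟨c, hcM⟩
  have hmy : E m y := hmM.1
  have hmC : m ∈ CSet E y := by
    rcases hmM.2 with rfl | hcm
    · exact hc
    · exact hCP m hmy hcm
  -- show relSet E y ⊆ relSet E m
  have hsub : relSet E y ⊆ relSet E m := by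
    intro z hz
    simp only [relSet, ancSet, descSet, Set.mem_iUnion, Set.mem_setOf_eq] at hz ⊢
    obtain ⟨x, hxy, hxz⟩ := hz
    rcases ReflTransGen.cases_tail hxy with heq | ⟨p, hxp, hpy⟩
    · -- x = y (heq : y = x)
      refine ⟨m, ReflTransGen.refl, ?_⟩
      exact ReflTransGen.head hmy (heq ▸ hxz)
    · by_cases hpm : p = m
      · exact ⟨x, hpm ▸ hxp, hxz⟩
      · rcases hmC.2 p hpy hpm with hmp | hpm'
        · -- E m p : contradiction with maximality / acyclicity
          exfalso
          rcases hmM.2 with rfl | hcm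
          · -- m = c, so p ∈ M
            have hpM : p ∈ M := ⟨hpy, Or.inr hmp⟩
            exact (hrel m p hmp).not_ge (hmax hpM (hrel m p hmp).le)
          · by_cases hpc : p = c
            · exact hacyc c (TransGen.tail (TransGen.single hcm) (hpc ▸ hmp))
            · rcases hc.2 p hpy hpc with hcp | hpc'
              · have hpM : p ∈ M := ⟨hpy, Or.inr hcp⟩
                exact (hrel m p hmp).not_ge (hmax hpM (hrel m p hmp).le)
              · exact hacyc c (((TransGen.single hcm).tail hmp).tail hpc')
        · -- E p m
          exact ⟨x, hxp.tail hpm', hxz⟩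
  have hle : (relSet E y).ncard ≤ (relSet E m).ncard :=
    Set.ncard_le_ncard hsub (Set.toFinite _)
  exact absurd (hrel m y hmy) (not_lt.mpr hle)
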